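/- Let (C, D₀) and (C, D) be two flat differential complexes on the same R[[ε]]-module C = C₀[[ε]], with D = D₀ + εD₁ + …, where each Dⱼ (j ≥ 1) lies in a space B of operators such that H¹(B, D₀) = 0 (every operator-valued 1-cocycle for D₀ is a coboundary). Then there exists ρ = Id + ερ₁ + ε²ρ₂ + … with ρⱼ ∈ B⁰ such that D∘ρ = ρ∘D₀; in particular ρ is invertible and restricts to an isomorphism of R[[ε]]-modules H⁰(C₀, D₀)[[ε]] → H⁰(C, D). -/

import Mathlib

open Finset

/-- The operator `T = T₀ + εT₁ + …` on `C = C₀[[ε]]` determined by a family of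
operators `Tⱼ` on `C₀` (elements of `C₀[[ε]]` are encoded as coefficient
sequences `ℕ → C₀`). -/
def seqConv {C₀ : Type*} [AddCommGroup C₀] [Module ℝ C₀]
    (T : ℕ → (C₀ →ₗ[ℝ] C₀)) (f : ℕ → C₀) : ℕ → C₀ :=
  fun n => ∑ i ∈ range (n + 1), T i (f (n - i))

section Helpers
variable {C₀ : Type*} [AddCommGroup C₀] [Module ℝ C₀]

/-- split a `range (n+1)` sum into the `0` term plus the `Icc 1 n` part -/
lemma sum_range_succ_split {M : Type*} [AddCommMonoid M] (F : ℕ → M) (n : ℕ) :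
    ∑ i ∈ range (n + 1), F i = F 0 + ∑ i ∈ Icc 1 n, F i := by
  have h : range (n + 1) = insert 0 (Icc 1 n) := by
    ext x; simp only [mem_range, mem_insert, mem_Icc]; omega
  rw [h, Finset.sum_insert (by simp)]

/-- the "Cauchy product" formula for composing two `seqConv`s -/
lemma seqConv_seqConv (T S : ℕ → (C₀ →ₗ[ℝ] C₀)) (f : ℕ → C₀) (n : ℕ) :
    seqConv T (seqConv S f) n
      = ∑ k ∈ range (n + 1), (∑ i ∈ range (k + 1), T i ∘ₗ S (k - i)) (f (n - k)) := by
  unfold seqConv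
  simp only [map_sum, LinearMap.sum_apply, LinearMap.comp_apply]
  rw [Finset.sum_sigma' (range (n+1)) (fun i => range (n - i + 1))
        (fun i j => T i (S j (f (n - i - j)))),
      Finset.sum_sigma' (range (n+1)) (fun k => range (k + 1))
        (fun k i => T i (S (k - i) (f (n - k))))]
  refine Finset.sum_nbij' (fun p => ⟨p.1 + p.2, p.1⟩) (fun p => ⟨p.2, p.1 - p.2⟩) ?_ ?_ ?_ ?_ ?_
  · rintro ⟨i, j⟩ hm
    simp only [mem_sigma, mem_range] at hm ⊢; omega
  · rintro ⟨k, i⟩ hm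
    simp only [mem_sigma, mem_range] at hm ⊢; omega
  · rintro ⟨i, j⟩ hm; simp
  · rintro ⟨k, i⟩ hm
    simp only [mem_sigma, mem_range] at hm
    have : i + (k - i) = k := by omega
    simp [this]
  · rintro ⟨i, j⟩ hm
    simp only [mem_sigma, mem_range] at hm
    have h1 : i + j - i = j := by omega
    have h2 : n - i - j = n - (i + j) := by omega
    rw [h1, h2]
end Helpers

section Part2
variable {C₀ : Type*} [AddCommGroup C₀] [Module ℝ C₀]

/-- the coefficient-wise intertwining equation -/
def EqnK (Dseq g : ℕ → (C₀ →ₗ[ℝ] C₀)) (k : ℕ) : Prop :=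
  ∑ i ∈ range (k + 1), Dseq i ∘ₗ g (k - i) = g k ∘ₗ Dseq 0

lemma eqnK_congr {Dseq g g' : ℕ → (C₀ →ₗ[ℝ] C₀)} {k : ℕ}
    (h : ∀ j ≤ k, g j = g' j) (hg : EqnK Dseq g k) : EqnK Dseq g' k := by
  unfold EqnK at hg ⊢
  rw [← h k le_rfl, ← hg]
  refine Finset.sum_congr rfl fun i hi => ?_
  rw [h (k - i) (by omega)]

/-- coefficient-wise flatness -/
lemma flat_coeff {Dseq : ℕ → (C₀ →ₗ[ℝ] C₀)}
    (hflat : ∀ f : ℕ → C₀, seqConv Dseq (seqConv Dseq f) = 0) (k : ℕ) :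
    ∑ i ∈ range (k + 1), Dseq i ∘ₗ Dseq (k - i) = 0 := by
  ext x
  have key : ∀ m : ℕ, seqConv Dseq (fun j => if j = 0 then x else 0) m = Dseq m x := by
    intro m
    unfold seqConv
    have : ∀ i ∈ range (m + 1),
        Dseq i (if m - i = 0 then x else 0) = if i = m then Dseq i x else 0 := by
      intro i hi
      simp only [mem_range] at hi
      rcases eq_or_ne i m with rfl | h
      · simp
      · rw [if_neg (by omega), if_neg h, map_zero]
    rw [Finset.sum_congr rfl this, Finset.sum_ite_eq' (range (m + 1)) m (fun i => Dseq i x),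
      if_pos (by simp)]
  have h2 : ∑ i ∈ range (k + 1),
      Dseq i (seqConv Dseq (fun j => if j = 0 then x else 0) (k - i)) = 0 :=
    congrFun (hflat (fun j => if j = 0 then x else 0)) k
  simp only [key] at h2
  simpa [LinearMap.sum_apply, LinearMap.comp_apply] using h2

/-- the key cocycle computation -/
lemma cocycle {Dseq g : ℕ → (C₀ →ₗ[ℝ] C₀)}
    (hflat : ∀ f : ℕ → C₀, seqConv Dseq (seqConv Dseq f) = 0) (n : ℕ)
    (hprev : ∀ k < n, EqnK Dseq g k) :
    Dseq 0 ∘ₗ (∑ i ∈ Icc 1 n, Dseq i ∘ₗ g (n - i))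
      + (∑ i ∈ Icc 1 n, Dseq i ∘ₗ g (n - i)) ∘ₗ Dseq 0 = 0 := by
  simp only [← Module.End.mul_eq_comp]
  rw [Finset.mul_sum, Finset.sum_mul]
  have hL : ∀ i ∈ Icc 1 n,
      Dseq 0 * (Dseq i * g (n - i))
        = -∑ a ∈ Icc 1 i, Dseq a * Dseq (i - a) * g (n - i) := by
    intro i hi
    simp only [mem_Icc] at hi
    have h0 : Dseq 0 * Dseq i = -∑ a ∈ Icc 1 i, Dseq a * Dseq (i - a) := by
      have := flat_coeff hflat i
      simp only [← Module.End.mul_eq_comp] at this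
      rw [sum_range_succ_split (fun a => Dseq a * Dseq (i - a)) i] at this
      simp only [Nat.sub_zero] at this
      linear_combination (norm := (push_cast [mul_comm]; abel_nf)) this
    rw [← mul_assoc, h0, neg_mul, Finset.sum_mul]
  have hR : ∀ i ∈ Icc 1 n,
      Dseq i * g (n - i) * Dseq 0
        = ∑ b ∈ range (n - i + 1), Dseq i * (Dseq b * g (n - i - b)) := by
    intro i hi
    simp only [mem_Icc] at hi
    have heq := hprev (n - i) (by omega)
    unfold EqnK at heq
    simp only [← Module.End.mul_eq_comp] at heq
    rw [mul_assoc, ← heq, Finset.mul_sum]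
  rw [Finset.sum_congr rfl hL, Finset.sum_congr rfl hR, Finset.sum_neg_distrib]
  rw [neg_add_eq_zero]
  rw [Finset.sum_sigma' (Icc 1 n) (fun i => Icc 1 i)
        (fun i a => Dseq a * Dseq (i - a) * g (n - i)),
      Finset.sum_sigma' (Icc 1 n) (fun i => range (n - i + 1))
        (fun i b => Dseq i * (Dseq b * g (n - i - b)))]
  refine Finset.sum_nbij' (fun p => ⟨p.2, p.1 - p.2⟩) (fun p => ⟨p.1 + p.2, p.1⟩) ?_ ?_ ?_ ?_ ?_
  · rintro ⟨i, a⟩ hm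
    simp only [mem_sigma, mem_Icc, mem_range] at hm ⊢; omega
  · rintro ⟨i, b⟩ hm
    simp only [mem_sigma, mem_Icc, mem_range] at hm ⊢; omega
  · rintro ⟨i, a⟩ hm
    simp only [mem_sigma, mem_Icc] at hm
    have : a + (i - a) = i := by omega
    simp [this]
  · rintro ⟨i, b⟩ hm
    simp only [mem_sigma, mem_Icc, mem_range] at hm
    have : i + b - i = b := by omega
    simp [this]
  · rintro ⟨i, a⟩ hm
    simp only [mem_sigma, mem_Icc] at hm
    have h1 : i - a - (i - a) = 0 := by omega
    have h2 : n - a - (i - a) = n - i := by omega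
    rw [mul_assoc, h2]

end Part2

section Part3
variable {C₀ : Type*} [AddCommGroup C₀] [Module ℝ C₀]

/-- the next correction term, chosen by vanishing of `H¹(B)` -/
noncomputable def nextψ (B : Submodule ℝ (C₀ →ₗ[ℝ] C₀)) (Dseq : ℕ → (C₀ →ₗ[ℝ] C₀))
    (hH1 : ∀ Φ ∈ B, Dseq 0 ∘ₗ Φ + Φ ∘ₗ Dseq 0 = 0 →
      ∃ ψ ∈ B, Φ = Dseq 0 ∘ₗ ψ - ψ ∘ₗ Dseq 0)
    (n : ℕ) (g : ℕ → (C₀ →ₗ[ℝ] C₀))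
    (hΦB : (∑ i ∈ Icc 1 (n + 1), Dseq i ∘ₗ g (n + 1 - i)) ∈ B)
    (hco : Dseq 0 ∘ₗ (∑ i ∈ Icc 1 (n + 1), Dseq i ∘ₗ g (n + 1 - i))
      + (∑ i ∈ Icc 1 (n + 1), Dseq i ∘ₗ g (n + 1 - i)) ∘ₗ Dseq 0 = 0) :
    C₀ →ₗ[ℝ] C₀ :=
  (hH1 _ hΦB hco).choose

lemma nextψ_spec (B : Submodule ℝ (C₀ →ₗ[ℝ] C₀)) (Dseq : ℕ → (C₀ →ₗ[ℝ] C₀))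
    (hH1 : ∀ Φ ∈ B, Dseq 0 ∘ₗ Φ + Φ ∘ₗ Dseq 0 = 0 →
      ∃ ψ ∈ B, Φ = Dseq 0 ∘ₗ ψ - ψ ∘ₗ Dseq 0)
    (n : ℕ) (g : ℕ → (C₀ →ₗ[ℝ] C₀)) (hΦB) (hco) :
    nextψ B Dseq hH1 n g hΦB hco ∈ B ∧
      (∑ i ∈ Icc 1 (n + 1), Dseq i ∘ₗ g (n + 1 - i))
        = Dseq 0 ∘ₗ nextψ B Dseq hH1 n g hΦB hco
          - nextψ B Dseq hH1 n g hΦB hco ∘ₗ Dseq 0 :=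
  (hH1 _ hΦB hco).choose_spec

lemma nextΦ_mem (B : Submodule ℝ (C₀ →ₗ[ℝ] C₀)) (Dseq : ℕ → (C₀ →ₗ[ℝ] C₀))
    (hBcomp : ∀ Φ ∈ B, ∀ Ψ ∈ B, Φ ∘ₗ Ψ ∈ B)
    (hDB : ∀ j : ℕ, 1 ≤ j → Dseq j ∈ B)
    (n : ℕ) (g : ℕ → (C₀ →ₗ[ℝ] C₀)) (hg0 : g 0 = LinearMap.id)
    (hgB : ∀ j, 1 ≤ j → g j ∈ B) :
    (∑ i ∈ Icc 1 (n + 1), Dseq i ∘ₗ g (n + 1 - i)) ∈ B := by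
  refine Submodule.sum_mem B fun i hi => ?_
  simp only [mem_Icc] at hi
  rcases eq_or_ne (n + 1 - i) 0 with h | h
  · rw [h, hg0, LinearMap.comp_id]
    exact hDB i hi.1
  · exact hBcomp _ (hDB i hi.1) _ (hgB _ (by omega))

/-- the recursive construction of the intertwiner coefficients -/
noncomputable def build (B : Submodule ℝ (C₀ →ₗ[ℝ] C₀)) (Dseq : ℕ → (C₀ →ₗ[ℝ] C₀))
    (hBcomp : ∀ Φ ∈ B, ∀ Ψ ∈ B, Φ ∘ₗ Ψ ∈ B)
    (hflat : ∀ f : ℕ → C₀, seqConv Dseq (seqConv Dseq f) = 0)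
    (hDB : ∀ j : ℕ, 1 ≤ j → Dseq j ∈ B)
    (hH1 : ∀ Φ ∈ B, Dseq 0 ∘ₗ Φ + Φ ∘ₗ Dseq 0 = 0 →
      ∃ ψ ∈ B, Φ = Dseq 0 ∘ₗ ψ - ψ ∘ₗ Dseq 0) :
    ∀ n : ℕ, {g : ℕ → (C₀ →ₗ[ℝ] C₀) //
      g 0 = LinearMap.id ∧ (∀ j, 1 ≤ j → g j ∈ B) ∧ ∀ k ≤ n, EqnK Dseq g k}
  | 0 => ⟨fun k => if k = 0 then LinearMap.id else 0, by
      refine ⟨rfl, fun j hj => by simp only; rw [if_neg (by omega)]; exact zero_mem B, ?_⟩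
      intro k hk
      interval_cases k
      unfold EqnK
      simp⟩
  | (n + 1) =>
    ⟨Function.update (build B Dseq hBcomp hflat hDB hH1 n).1 (n + 1)
      (-(nextψ B Dseq hH1 n (build B Dseq hBcomp hflat hDB hH1 n).1
        (nextΦ_mem B Dseq hBcomp hDB n _ (build B Dseq hBcomp hflat hDB hH1 n).2.1
          (build B Dseq hBcomp hflat hDB hH1 n).2.2.1)
        (cocycle hflat (n + 1)
          (fun k hk => (build B Dseq hBcomp hflat hDB hH1 n).2.2.2 k (by omega))))), by
      set g := (build B Dseq hBcomp hflat hDB hH1 n).1 with hgdef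
      obtain ⟨hg0, hgB, hgEq⟩ := (build B Dseq hBcomp hflat hDB hH1 n).2
      obtain ⟨hψB, hψ⟩ := nextψ_spec B Dseq hH1 n g
        (nextΦ_mem B Dseq hBcomp hDB n g hg0 hgB)
        (cocycle hflat (n + 1) (fun k hk => hgEq k (by omega)))
      set ψ := nextψ B Dseq hH1 n g
        (nextΦ_mem B Dseq hBcomp hDB n g hg0 hgB)
        (cocycle hflat (n + 1) (fun k hk => hgEq k (by omega))) with hψdef
      refine ⟨?_, ?_, ?_⟩
      · rw [Function.update_of_ne (by omega), hg0]
      · intro j hj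
        rcases eq_or_ne j (n + 1) with rfl | h
        · rw [Function.update_self]; exact neg_mem hψB
        · rw [Function.update_of_ne h]; exact hgB j hj
      · intro k hk
        rcases eq_or_ne k (n + 1) with rfl | h
        · unfold EqnK
          rw [Function.update_self,
            sum_range_succ_split (fun i => Dseq i ∘ₗ Function.update g (n+1) (-ψ) (n + 1 - i))
              (n + 1)]
          simp only [Nat.sub_zero, Function.update_self]
          have hrest : ∑ i ∈ Icc 1 (n + 1),
              Dseq i ∘ₗ Function.update g (n + 1) (-ψ) (n + 1 - i)
                = ∑ i ∈ Icc 1 (n + 1), Dseq i ∘ₗ g (n + 1 - i) := by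
            refine Finset.sum_congr rfl fun i hi => ?_
            simp only [mem_Icc] at hi
            rw [Function.update_of_ne (by omega)]
          rw [hrest, hψ]
          simp only [LinearMap.comp_neg, LinearMap.neg_comp, LinearMap.comp_sub,
            LinearMap.sub_comp]
          abel
        · refine eqnK_congr (fun j hj => ?_) (hgEq k (by omega))
          rw [Function.update_of_ne (by omega)]⟩

lemma build_succ (B : Submodule ℝ (C₀ →ₗ[ℝ] C₀)) (Dseq : ℕ → (C₀ →ₗ[ℝ] C₀))
    (hBcomp : ∀ Φ ∈ B, ∀ Ψ ∈ B, Φ ∘ₗ Ψ ∈ B)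
    (hflat : ∀ f : ℕ → C₀, seqConv Dseq (seqConv Dseq f) = 0)
    (hDB : ∀ j : ℕ, 1 ≤ j → Dseq j ∈ B)
    (hH1 : ∀ Φ ∈ B, Dseq 0 ∘ₗ Φ + Φ ∘ₗ Dseq 0 = 0 →
      ∃ ψ ∈ B, Φ = Dseq 0 ∘ₗ ψ - ψ ∘ₗ Dseq 0)
    (n : ℕ) : ∃ v, (build B Dseq hBcomp hflat hDB hH1 (n + 1)).1
    = Function.update (build B Dseq hBcomp hflat hDB hH1 n).1 (n + 1) v :=
  ⟨_, rfl⟩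

lemma build_stable (B : Submodule ℝ (C₀ →ₗ[ℝ] C₀)) (Dseq : ℕ → (C₀ →ₗ[ℝ] C₀))
    (hBcomp : ∀ Φ ∈ B, ∀ Ψ ∈ B, Φ ∘ₗ Ψ ∈ B)
    (hflat : ∀ f : ℕ → C₀, seqConv Dseq (seqConv Dseq f) = 0)
    (hDB : ∀ j : ℕ, 1 ≤ j → Dseq j ∈ B)
    (hH1 : ∀ Φ ∈ B, Dseq 0 ∘ₗ Φ + Φ ∘ₗ Dseq 0 = 0 →
      ∃ ψ ∈ B, Φ = Dseq 0 ∘ₗ ψ - ψ ∘ₗ Dseq 0) :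
    ∀ m n, n ≤ m →
    (build B Dseq hBcomp hflat hDB hH1 m).1 n = (build B Dseq hBcomp hflat hDB hH1 n).1 n := by
  intro m
  induction m with
  | zero => intro n hn
            have h0 : n = 0 := by omega
            subst h0; rfl
  | succ k ih =>
    intro n hn
    rcases eq_or_ne n (k + 1) with rfl | h
    · rfl
    · obtain ⟨v, hv⟩ := build_succ B Dseq hBcomp hflat hDB hH1 k
      rw [hv, Function.update_of_ne h, ih n (by omega)]
end Part3

section Part4
variable {C₀ : Type*} [AddCommGroup C₀] [Module ℝ C₀]

/-- the formal inverse of a power series of operators with leading term `Id` -/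
noncomputable def invρ (ρ : ℕ → (C₀ →ₗ[ℝ] C₀)) : ℕ → (C₀ →ₗ[ℝ] C₀)
  | 0 => LinearMap.id
  | (n + 1) => -∑ i ∈ (Icc 1 (n + 1)).attach,
      ρ i.1 ∘ₗ invρ ρ (n + 1 - i.1)
termination_by n => n
decreasing_by
  have := mem_Icc.mp i.2
  omega

lemma invρ_conv (ρ : ℕ → (C₀ →ₗ[ℝ] C₀)) (hρ0 : ρ 0 = LinearMap.id) (n : ℕ) :
    ∑ i ∈ range (n + 1), ρ i ∘ₗ invρ ρ (n - i)
      = if n = 0 then LinearMap.id else 0 := by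
  cases n with
  | zero => simp [invρ, hρ0]
  | succ m =>
    rw [if_neg (by omega),
      sum_range_succ_split (fun i => ρ i ∘ₗ invρ ρ (m + 1 - i)) (m + 1)]
    simp only [Nat.sub_zero, hρ0, LinearMap.id_comp]
    have : invρ ρ (m + 1) = -∑ i ∈ Icc 1 (m + 1), ρ i ∘ₗ invρ ρ (m + 1 - i) := by
      rw [invρ]
      congr 1
      exact Finset.sum_attach (Icc 1 (m + 1)) (fun i => ρ i ∘ₗ invρ ρ (m + 1 - i))
    rw [this]
    abel

lemma seqConv_invρ (ρ : ℕ → (C₀ →ₗ[ℝ] C₀)) (hρ0 : ρ 0 = LinearMap.id) (h : ℕ → C₀) :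
    seqConv ρ (seqConv (invρ ρ) h) = h := by
  funext n
  rw [seqConv_seqConv]
  have hterm : ∀ k ∈ range (n + 1),
      (∑ i ∈ range (k + 1), ρ i ∘ₗ invρ ρ (k - i)) (h (n - k))
        = if k = 0 then h (n - k) else 0 := by
    intro k hk
    rw [invρ_conv ρ hρ0 k]
    rcases eq_or_ne k 0 with rfl | hne
    · simp
    · simp [hne]
  rw [Finset.sum_congr rfl hterm]
  have : ∀ k ∈ range (n + 1), (if k = 0 then h (n - k) else 0)
      = if k = 0 then h (n - 0) else 0 := by
    intro k hk
    rcases eq_or_ne k 0 with rfl | hne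
    · rfl
    · simp [hne]
  rw [Finset.sum_congr rfl this, Finset.sum_ite_eq' (range (n + 1)) 0 (fun _ => h (n - 0)),
    if_pos (by simp)]
  simp

lemma seqConv_injective (ρ : ℕ → (C₀ →ₗ[ℝ] C₀)) (hρ0 : ρ 0 = LinearMap.id) :
    Function.Injective (seqConv ρ) := by
  intro f g hfg
  funext n
  induction n using Nat.strong_induction_on with
  | _ n ih =>
    have h := congrFun hfg n
    unfold seqConv at h
    rw [sum_range_succ_split (fun i => ρ i (f (n - i))) n,
        sum_range_succ_split (fun i => ρ i (g (n - i))) n] at h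
    simp only [Nat.sub_zero, hρ0, LinearMap.id_apply] at h
    have hsum : ∑ i ∈ Icc 1 n, ρ i (f (n - i)) = ∑ i ∈ Icc 1 n, ρ i (g (n - i)) := by
      refine Finset.sum_congr rfl fun i hi => ?_
      simp only [mem_Icc] at hi
      rw [ih (n - i) (by omega)]
    rw [hsum] at h
    exact add_right_cancel h

end Part4

/-- Lemma 4.6 of Cattaneo–Felder–Tomassini, abstractly.  `D₀` and
`D = D₀ + εD₁ + …` are flat differentials on `C = C₀[[ε]]`, with each `Dⱼ`
(`j ≥ 1`) in a composition-closed subcomplex `B` of operators whose first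
cohomology vanishes.  Then there is `ρ = Id + ερ₁ + ε²ρ₂ + …` with `ρⱼ ∈ B`
and `D∘ρ = ρ∘D₀`; in particular `ρ` is invertible and restricts to an
isomorphism `H⁰(C₀,D₀)[[ε]] → H⁰(C,D)` of `ℝ[[ε]]`-modules. -/
theorem intertwiner_exists
    {C₀ : Type*} [AddCommGroup C₀] [Module ℝ C₀]
    (B : Submodule ℝ (C₀ →ₗ[ℝ] C₀))
    (hBcomp : ∀ Φ ∈ B, ∀ Ψ ∈ B, Φ ∘ₗ Ψ ∈ B)
    (Dseq : ℕ → (C₀ →ₗ[ℝ] C₀))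
    (hBsub : ∀ Φ ∈ B, Dseq 0 ∘ₗ Φ - Φ ∘ₗ Dseq 0 ∈ B)
    (hflat0 : Dseq 0 ∘ₗ Dseq 0 = 0)
    (hflat : ∀ f : ℕ → C₀, seqConv Dseq (seqConv Dseq f) = 0)
    (hDB : ∀ j : ℕ, 1 ≤ j → Dseq j ∈ B)
    (hH1 : ∀ Φ ∈ B, Dseq 0 ∘ₗ Φ + Φ ∘ₗ Dseq 0 = 0 →
      ∃ ψ ∈ B, Φ = Dseq 0 ∘ₗ ψ - ψ ∘ₗ Dseq 0) :
    ∃ ρ : ℕ → (C₀ →ₗ[ℝ] C₀),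
      ρ 0 = LinearMap.id ∧
      (∀ j : ℕ, 1 ≤ j → ρ j ∈ B) ∧
      (∀ f : ℕ → C₀, seqConv Dseq (seqConv ρ f)
          = seqConv ρ (fun n => Dseq 0 (f n))) ∧
      Function.Bijective (seqConv ρ) ∧
      Set.BijOn (seqConv ρ) {f | ∀ n, Dseq 0 (f n) = 0}
        {f | seqConv Dseq f = 0} := by
  set ρ : ℕ → (C₀ →ₗ[ℝ] C₀) :=
    fun n => (build B Dseq hBcomp hflat hDB hH1 n).1 n with hρdef
  have hρ0 : ρ 0 = LinearMap.id := (build B Dseq hBcomp hflat hDB hH1 0).2.1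
  have hρB : ∀ j : ℕ, 1 ≤ j → ρ j ∈ B :=
    fun j hj => (build B Dseq hBcomp hflat hDB hH1 j).2.2.1 j hj
  have hEq : ∀ k, EqnK Dseq ρ k := by
    intro k
    refine eqnK_congr (fun j hj => ?_)
      ((build B Dseq hBcomp hflat hDB hH1 k).2.2.2 k le_rfl)
    exact build_stable B Dseq hBcomp hflat hDB hH1 k j hj
  have hinter : ∀ f : ℕ → C₀, seqConv Dseq (seqConv ρ f)
      = seqConv ρ (fun n => Dseq 0 (f n)) := by
    intro f
    funext n
    rw [seqConv_seqConv]
    have : ∀ k ∈ range (n + 1),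
        (∑ i ∈ range (k + 1), Dseq i ∘ₗ ρ (k - i)) (f (n - k))
          = ρ k (Dseq 0 (f (n - k))) := by
      intro k hk
      rw [hEq k]
      rfl
    rw [Finset.sum_congr rfl this]
    rfl
  have hinj : Function.Injective (seqConv ρ) := seqConv_injective ρ hρ0
  have hsurj : Function.Surjective (seqConv ρ) :=
    fun h => ⟨seqConv (invρ ρ) h, seqConv_invρ ρ hρ0 h⟩
  have hzero : seqConv ρ (fun _ => (0 : C₀)) = 0 := by
    funext n
    unfold seqConv
    simp
  refine ⟨ρ, hρ0, hρB, hinter, ⟨hinj, hsurj⟩, ?_, ?_, ?_⟩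
  · -- MapsTo
    intro f hf
    simp only [Set.mem_setOf_eq] at hf ⊢
    rw [hinter f]
    have : (fun n => Dseq 0 (f n)) = fun _ => (0 : C₀) := funext hf
    rw [this, hzero]
  · -- InjOn
    exact hinj.injOn
  · -- SurjOn
    intro g hg
    simp only [Set.mem_setOf_eq] at hg
    obtain ⟨f, hf⟩ := hsurj g
    refine ⟨f, ?_, hf⟩
    simp only [Set.mem_setOf_eq]
    have h1 : seqConv ρ (fun n => Dseq 0 (f n)) = seqConv ρ (fun _ => (0 : C₀)) := by
      rw [← hinter f, hf, hg, hzero]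
    have h2 := hinj h1
    intro n
    exact congrFun h2 n
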